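/- Let M be a compact topological manifold of dimension n that is a C^r manifold (i.e., a smooth manifold with C^r structure) for some r with 2 ≤ r ≤ ∞, without boundary. Then there exists a C^r embedding of M into ℝ^{2n+1}; that is, there exists a map f : M → ℝ^{2n+1} that is C^r, is a topological embedding (a homeomorphism onto its image), and is an immersion (its differential at every point is injective). -/

import Mathlib

open scoped Manifold ENNReal NNReal
open Set Function Module Topology
open scoped ContDiff

local notation "𝔼" k => EuclideanSpace ℝ (Fin k)

/-- dimH of a C¹ image of an open set does not exceed dimH of the set. -/
theorem whitney_dimH_image_le {E F : Type*} [NormedAddCommGroup E] [NormedSpace ℝ E]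
    [SecondCountableTopology E]
    [NormedAddCommGroup F] [NormedSpace ℝ F] {f : E → F} {s : Set E}
    (hf : ContDiffOn ℝ 1 f s) (hs : IsOpen s) : dimH (f '' s) ≤ dimH s :=
  dimH_image_le_of_locally_lipschitzOn fun x hx => by
    obtain ⟨K, t, ht, hlip⟩ := ((hf x hx).contDiffAt (hs.mem_nhds hx)).exists_lipschitzOnWith
    exact ⟨K, t, nhdsWithin_le_nhds ht, hlip⟩

/-- Projection along a nonzero direction. -/
theorem whitney_exists_proj (N : ℕ) (v : 𝔼 (N + 1)) (hv : v ≠ 0) :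
    ∃ L : (𝔼 (N + 1)) →L[ℝ] 𝔼 N, ∀ w, L w = 0 ↔ ∃ c : ℝ, w = c • v := by
  haveI : Fact (finrank ℝ (𝔼 (N + 1)) = N + 1) := ⟨finrank_euclideanSpace_fin⟩
  set K : Submodule ℝ (𝔼 (N + 1)) := (ℝ ∙ v)ᗮ with hK
  let B : OrthonormalBasis (Fin N) ℝ K := OrthonormalBasis.fromOrthogonalSpanSingleton N hv
  refine ⟨B.repr.toLinearIsometry.toContinuousLinearMap ∘L
    (Submodule.orthogonalProjectionOnto K : (𝔼 (N + 1)) →L[ℝ] K), fun w => ?_⟩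
  have h1 : ∀ u : K, B.repr.toLinearIsometry.toContinuousLinearMap u = 0 ↔ u = 0 := fun u => by
    simp only [LinearIsometry.coe_toContinuousLinearMap, LinearIsometryEquiv.coe_toLinearIsometry]
    exact B.repr.map_eq_zero_iff
  rw [ContinuousLinearMap.comp_apply, h1, Submodule.orthogonalProjectionOnto_eq_zero_iff, hK,
    Submodule.orthogonal_orthogonal]
  constructor
  · rintro h
    rcases Submodule.mem_span_singleton.1 h with ⟨c, hc⟩
    exact ⟨c, hc.symm⟩
  · rintro ⟨c, rfl⟩
    exact Submodule.mem_span_singleton.2 ⟨c, rfl⟩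

/-- A linear injection padding a Euclidean space into a larger one. -/
theorem whitney_pad {a b : ℕ} (hab : a ≤ b) :
    ∃ L : (𝔼 a) →L[ℝ] 𝔼 b, Function.Injective L := by
  let e1 := PiLp.continuousLinearEquiv 2 ℝ (fun _ : Fin a => ℝ)
  let e2 := PiLp.continuousLinearEquiv 2 ℝ (fun _ : Fin b => ℝ)
  let J : (Fin a → ℝ) →ₗ[ℝ] (Fin b → ℝ) := Function.ExtendByZero.linearMap ℝ (Fin.castLE hab)
  have hs : Function.Injective (Fin.castLE hab) := Fin.castLE_injective hab
  have hJ : Function.Injective J := by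
    intro x y h
    funext j
    have := congrFun h (Fin.castLE hab j)
    exact (hs.extend_apply x 0 j).symm.trans (this.trans (hs.extend_apply y 0 j))
  refine ⟨e2.symm.toContinuousLinearMap ∘L
    ((LinearMap.toContinuousLinearMap J) ∘L e1.toContinuousLinearMap), ?_⟩
  intro x y h
  simp only [ContinuousLinearMap.comp_apply, ContinuousLinearEquiv.coe_coe,
    LinearMap.coe_toContinuousLinearMap'] at h
  exact e1.injective (hJ (e2.symm.injective h))

section Manifold

variable {n : ℕ} {M : Type*} [TopologicalSpace M]
    [ChartedSpace (EuclideanSpace ℝ (Fin n)) M]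
    [IsManifold (𝓡 n) (⊤ : ℕ∞) M]

/-- Composing with a continuous linear map, differentials compose. -/
theorem whitney_mfderiv_clm_comp {a b : ℕ} {g : M → 𝔼 a}
    (hg : ContMDiff (𝓡 n) 𝓘(ℝ, 𝔼 a) ∞ g) (L : (𝔼 a) →L[ℝ] 𝔼 b) (x : M) :
    mfderiv (𝓡 n) 𝓘(ℝ, 𝔼 b) (⇑L ∘ g) x = L.comp (mfderiv (𝓡 n) 𝓘(ℝ, 𝔼 a) g x) := by
  have hL : MDifferentiableAt 𝓘(ℝ, 𝔼 a) 𝓘(ℝ, 𝔼 b) (⇑L) (g x) :=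
    (L.contDiff.contMDiff (n := ⊤)).mdifferentiableAt (by simp)
  rw [mfderiv_comp x hL ((hg x).mdifferentiableAt (by simp))]
  congr 1
  rw [mfderiv_eq_fderiv, L.fderiv]

/-- The key dimension-reduction step: an injective immersion into `ℝ^(N+1)` with
`2n+1 ≤ N` can be projected to an injective immersion into `ℝ^N`. -/
theorem whitney_step [CompactSpace M] {N : ℕ} (hN : 2 * n + 1 ≤ N)
    (g : M → 𝔼 (N + 1)) (hg : ContMDiff (𝓡 n) 𝓘(ℝ, 𝔼 (N + 1)) ∞ g)
    (hinj : Function.Injective g)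
    (himm : ∀ x : M, Function.Injective (mfderiv (𝓡 n) 𝓘(ℝ, 𝔼 (N + 1)) g x)) :
    ∃ g' : M → 𝔼 N, ContMDiff (𝓡 n) 𝓘(ℝ, 𝔼 N) ∞ g' ∧ Function.Injective g' ∧
      ∀ x : M, Function.Injective (mfderiv (𝓡 n) 𝓘(ℝ, 𝔼 N) g' x) := by
  rcases isEmpty_or_nonempty M with hM | hM
  · exact ⟨fun _ => 0, fun x => (hM.false x).elim, fun x => (hM.false x).elim,
      fun x => (hM.false x).elim⟩
  set I := (𝓡 n)
  -- finitely many charts covering M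
  obtain ⟨t, ht⟩ : ∃ t : Finset M, univ ⊆ ⋃ p ∈ t, (extChartAt I p).source :=
    isCompact_univ.elim_finite_subcover (fun p : M => (extChartAt I p).source)
      (fun p => isOpen_extChartAt_source p)
      (fun x _ => mem_iUnion.2 ⟨x, mem_extChartAt_source x⟩)
  -- local representatives
  set G : M → (𝔼 n) → 𝔼 (N + 1) := fun p => g ∘ (extChartAt I p).symm with hGdef
  have hGsm : ∀ p : M, ContDiffOn ℝ 2 (G p) (extChartAt I p).target := fun p => by
    have := ((hg.of_le (show (2 : WithTop ℕ∞) ≤ ((⊤ : ℕ∞) : WithTop ℕ∞) from WithTop.coe_le_coe.2 (le_top : (2 : ℕ∞) ≤ ⊤))).comp_contMDiffOn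
      ((contMDiffOn_extChartAt_symm (n := ∞) p).of_le (show (2 : WithTop ℕ∞) ≤ ((⊤ : ℕ∞) : WithTop ℕ∞) from WithTop.coe_le_coe.2 (le_top : (2 : ℕ∞) ≤ ⊤)))).contDiffOn
    exact_mod_cast this
  -- secant maps
  set σ : M → M → (((𝔼 n) × 𝔼 n) × ℝ) → 𝔼 (N + 1) :=
    fun p q z => z.2 • (G p z.1.1 - G q z.1.2) with hσdef
  set sσ : M → M → Set (((𝔼 n) × 𝔼 n) × ℝ) :=
    fun p q => ((extChartAt I p).target ×ˢ (extChartAt I q).target) ×ˢ univ with hsσdef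
  -- tangent maps
  set τ : M → ((𝔼 n) × 𝔼 n) → 𝔼 (N + 1) :=
    fun p z => fderivWithin ℝ (G p) (extChartAt I p).target z.1 z.2 with hτdef
  set sτ : M → Set ((𝔼 n) × 𝔼 n) := fun p => (extChartAt I p).target ×ˢ univ with hsτdef
  -- the bad set
  set Bad : Set (𝔼 (N + 1)) :=
    (⋃ p ∈ (t : Set M), ⋃ q ∈ (t : Set M), σ p q '' sσ p q) ∪
      ⋃ p ∈ (t : Set M), τ p '' sτ p with hBadDef
  -- dimension bound for the secant pieces
  have hdimσ : ∀ p q : M, dimH (σ p q '' sσ p q) ≤ ((2 * n + 1 : ℕ) : ℝ≥0∞) := by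
    intro p q
    have hopen : IsOpen (sσ p q) :=
      (((isOpen_extChartAt_target p).prod (isOpen_extChartAt_target q)).prod isOpen_univ)
    have hcd : ContDiffOn ℝ 1 (σ p q) (sσ p q) := by
      apply ContDiffOn.smul (contDiff_snd.contDiffOn)
      apply ContDiffOn.sub
      · exact ((hGsm p).of_le one_le_two).comp
          ((contDiff_fst.comp contDiff_fst).contDiffOn) (fun z hz => hz.1.1)
      · exact ((hGsm q).of_le one_le_two).comp
          ((contDiff_snd.comp contDiff_fst).contDiffOn) (fun z hz => hz.1.2)
    calc dimH (σ p q '' sσ p q) ≤ dimH (sσ p q) := whitney_dimH_image_le hcd hopen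
      _ ≤ dimH (univ : Set (((𝔼 n) × 𝔼 n) × ℝ)) := dimH_mono (subset_univ _)
      _ = (finrank ℝ (((𝔼 n) × 𝔼 n) × ℝ) : ℝ≥0∞) := Real.dimH_univ_eq_finrank _
      _ = ((2 * n + 1 : ℕ) : ℝ≥0∞) := by
          rw [Module.finrank_prod, Module.finrank_prod, finrank_euclideanSpace_fin,
            Module.finrank_self]
          rw [Nat.cast_inj]
          omega
  -- dimension bound for the tangent pieces
  have hdimτ : ∀ p : M, dimH (τ p '' sτ p) ≤ ((2 * n + 1 : ℕ) : ℝ≥0∞) := by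
    intro p
    have hopen : IsOpen (sτ p) := (isOpen_extChartAt_target p).prod isOpen_univ
    have hD : ContDiffOn ℝ 1 (fderivWithin ℝ (G p) (extChartAt I p).target)
        (extChartAt I p).target :=
      (hGsm p).fderivWithin (isOpen_extChartAt_target p).uniqueDiffOn (by norm_num)
    have happly : ContDiff ℝ 1 (fun φw : ((𝔼 n) →L[ℝ] 𝔼 (N + 1)) × 𝔼 n => φw.1 φw.2) :=
      isBoundedBilinearMap_apply.contDiff.of_le le_top
    have hcd : ContDiffOn ℝ 1 (τ p) (sτ p) := by
      have h2 := happly.comp_contDiffOn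
        (((hD.comp (contDiff_fst.contDiffOn (s := sτ p)) (fun z (hz : z ∈ sτ p) => hz.1)).prodMk
          (contDiff_snd.contDiffOn (s := sτ p))))
      exact h2
    calc dimH (τ p '' sτ p) ≤ dimH (sτ p) := whitney_dimH_image_le hcd hopen
      _ ≤ dimH (univ : Set ((𝔼 n) × 𝔼 n)) := dimH_mono (subset_univ _)
      _ = (finrank ℝ ((𝔼 n) × 𝔼 n) : ℝ≥0∞) := Real.dimH_univ_eq_finrank _
      _ ≤ ((2 * n + 1 : ℕ) : ℝ≥0∞) := by
          rw [Module.finrank_prod, finrank_euclideanSpace_fin]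
          exact Nat.cast_le.2 (by omega)
  -- the bad set has small Hausdorff dimension, so its complement is dense
  have hdimBad : dimH Bad < (finrank ℝ (𝔼 (N + 1)) : ℝ≥0∞) := by
    have hS : dimH (⋃ p ∈ (t : Set M), ⋃ q ∈ (t : Set M), σ p q '' sσ p q) ≤
        ((2 * n + 1 : ℕ) : ℝ≥0∞) := by
      rw [dimH_bUnion t.countable_toSet]
      exact iSup₂_le fun p _ => by
        rw [dimH_bUnion t.countable_toSet]
        exact iSup₂_le fun q _ => hdimσ p q
    have hT : dimH (⋃ p ∈ (t : Set M), τ p '' sτ p) ≤ ((2 * n + 1 : ℕ) : ℝ≥0∞) := by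
      rw [dimH_bUnion t.countable_toSet]
      exact iSup₂_le fun p _ => hdimτ p
    rw [hBadDef, dimH_union, finrank_euclideanSpace_fin]
    refine lt_of_le_of_lt (max_le hS hT) ?_
    exact_mod_cast (by omega : 2 * n + 1 < N + 1)
  obtain ⟨v, hv⟩ : ∃ v : 𝔼 (N + 1), v ∉ Bad :=
    (dense_compl_of_dimH_lt_finrank hdimBad).nonempty
  -- membership of secants in the bad set
  have hmem_σ : ∀ (x y : M) (c : ℝ), c • (g x - g y) ∈ Bad := by
    intro x y c
    obtain ⟨p, hp, hxp⟩ : ∃ p ∈ t, x ∈ (extChartAt I p).source := by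
      simpa using ht (mem_univ x)
    obtain ⟨q, hq, hyq⟩ : ∃ q ∈ t, y ∈ (extChartAt I q).source := by
      simpa using ht (mem_univ y)
    refine mem_union_left _ (mem_biUnion (Finset.mem_coe.2 hp) (mem_biUnion (Finset.mem_coe.2 hq) ?_))
    refine ⟨((extChartAt I p x, extChartAt I q y), c),
      ⟨⟨(extChartAt I p).map_source hxp, (extChartAt I q).map_source hyq⟩, trivial⟩, ?_⟩
    simp only [hσdef, hGdef, Function.comp_apply, (extChartAt I p).left_inv hxp,
      (extChartAt I q).left_inv hyq]
  -- membership of tangent vectors in the bad set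
  have hmem_τ : ∀ (x : M) (u : 𝔼 n), mfderiv I 𝓘(ℝ, 𝔼 (N + 1)) g x u ∈ Bad := by
    intro x u
    obtain ⟨p, hp, hxp⟩ : ∃ p ∈ t, x ∈ (extChartAt I p).source := by
      simpa using ht (mem_univ x)
    have hxp' : x ∈ (chartAt (𝔼 n) p).source := by rwa [extChartAt_source] at hxp
    have htgt : extChartAt I p x ∈ (extChartAt I p).target := (extChartAt I p).map_source hxp
    have hGd : ContDiffAt ℝ ((2 : ℕ∞) : WithTop ℕ∞) (G p) (extChartAt I p x) := by
      have := (hGsm p).contDiffAt ((isOpen_extChartAt_target p).mem_nhds htgt)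
      exact_mod_cast this
    have hGmd : MDifferentiableAt 𝓘(ℝ, 𝔼 n) 𝓘(ℝ, 𝔼 (N + 1)) (G p) (extChartAt I p x) :=
      hGd.contMDiffAt.mdifferentiableAt (by norm_num)
    have hmfx : MDifferentiableAt I 𝓘(ℝ, 𝔼 n) (extChartAt I p) x :=
      (contMDiffAt_extChartAt' (n := ∞) hxp').mdifferentiableAt (by simp)
    have heq : g =ᶠ[𝓝 x] (G p) ∘ (extChartAt I p) := by
      filter_upwards [(isOpen_extChartAt_source p).mem_nhds hxp] with y hy
      simp only [hGdef, Function.comp_apply, (extChartAt I p).left_inv hy]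
    have hchain : mfderiv I 𝓘(ℝ, 𝔼 (N + 1)) g x =
        (mfderiv 𝓘(ℝ, 𝔼 n) 𝓘(ℝ, 𝔼 (N + 1)) (G p) (extChartAt I p x)).comp
          (mfderiv I 𝓘(ℝ, 𝔼 n) (extChartAt I p) x) := by
      rw [heq.mfderiv_eq]
      exact mfderiv_comp x hGmd hmfx
    have hfd : mfderiv 𝓘(ℝ, 𝔼 n) 𝓘(ℝ, 𝔼 (N + 1)) (G p) (extChartAt I p x) =
        fderivWithin ℝ (G p) (extChartAt I p).target (extChartAt I p x) := by
      rw [mfderiv_eq_fderiv, fderivWithin_of_isOpen (isOpen_extChartAt_target p) htgt]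
    refine mem_union_right _ (mem_biUnion (Finset.mem_coe.2 hp) ?_)
    refine ⟨(extChartAt I p x, mfderiv I 𝓘(ℝ, 𝔼 n) (extChartAt I p) x u),
      ⟨htgt, trivial⟩, ?_⟩
    simp only [hτdef]
    rw [← hfd, hchain]
    rfl
  -- the chosen direction is nonzero
  have hv0 : v ≠ 0 := by
    rintro rfl
    apply hv
    have := hmem_σ (Classical.arbitrary M) (Classical.arbitrary M) 0
    simpa using this
  obtain ⟨L, hL⟩ := whitney_exists_proj N v hv0
  refine ⟨⇑L ∘ g, (L.contDiff.contMDiff (n := ∞)).comp hg, ?_, ?_⟩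
  · -- injectivity
    intro x y hxy
    by_contra hne
    have h0 : L (g x - g y) = 0 := by
      rw [map_sub, sub_eq_zero]
      exact hxy
    rcases (hL _).1 h0 with ⟨c, hc⟩
    have hgne : g x - g y ≠ 0 := sub_ne_zero.2 fun h => hne (hinj h)
    have hc0 : c ≠ 0 := by
      rintro rfl
      rw [zero_smul] at hc
      exact hgne hc
    have hveq : v = c⁻¹ • (g x - g y) := by
      rw [hc, smul_smul, inv_mul_cancel₀ hc0, one_smul]
    exact hv (hveq ▸ hmem_σ x y c⁻¹)
  · -- immersion
    intro x
    rw [whitney_mfderiv_clm_comp hg L x]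
    set D := mfderiv I 𝓘(ℝ, 𝔼 (N + 1)) g x with hD
    have key : ∀ u : 𝔼 n, L (D u) = 0 → u = 0 := by
      intro u hu0
      by_contra hu
      rcases (hL _).1 hu0 with ⟨c, hc⟩
      have hDu : D u ≠ 0 := fun h => hu (himm x (h.trans (map_zero _).symm))
      have hc0 : c ≠ 0 := by
        rintro rfl
        rw [zero_smul] at hc
        exact hDu hc
      have hveq : v = D (c⁻¹ • u) := by
        rw [show D (c⁻¹ • u) = c⁻¹ • D u from D.map_smul c⁻¹ u, hc]
        exact (by rw [smul_smul, inv_mul_cancel₀ hc0, one_smul] : v = c⁻¹ • c • v)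
      exact hv (hveq ▸ hmem_τ x (c⁻¹ • u))
    intro u w huw
    have : L (D (u - w)) = 0 := by
      simp only [map_sub]
      rw [show L (D u - D w) = L (D u) - L (D w) from L.map_sub _ _, sub_eq_zero]
      exact huw
    have := key _ this
    exact sub_eq_zero.1 this

/-- Descend from `ℝ^(2n+1+j)` to `ℝ^(2n+1)`. -/
theorem whitney_down [CompactSpace M] :
    ∀ j (g : M → 𝔼 (2 * n + 1 + j)), ContMDiff (𝓡 n) 𝓘(ℝ, 𝔼 (2 * n + 1 + j)) ∞ g →
      Function.Injective g →
      (∀ x : M, Function.Injective (mfderiv (𝓡 n) 𝓘(ℝ, 𝔼 (2 * n + 1 + j)) g x)) →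
      ∃ g' : M → 𝔼 (2 * n + 1), ContMDiff (𝓡 n) 𝓘(ℝ, 𝔼 (2 * n + 1)) ∞ g' ∧
        Function.Injective g' ∧
        ∀ x : M, Function.Injective (mfderiv (𝓡 n) 𝓘(ℝ, 𝔼 (2 * n + 1)) g' x) := by
  intro j
  induction j with
  | zero => exact fun g hg h1 h2 => ⟨g, hg, h1, h2⟩
  | succ j ih =>
    intro g hg h1 h2
    obtain ⟨g', hg', h1', h2'⟩ :=
      whitney_step (N := 2 * n + 1 + j) (Nat.le_add_right _ _) g hg h1 h2
    exact ih g' hg' h1' h2'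

end Manifold

/-- **Whitney's embedding theorem.** A compact (Hausdorff) `C^r` manifold `M`
of dimension `n` without boundary, `2 ≤ r ≤ ∞`, admits a `C^r` embedding into
`ℝ^(2n+1)`: there is a map `f : M → ℝ^(2n+1)` that is `C^r`, a topological
embedding, and an immersion (its differential is injective at every point). -/
theorem stmt0 (n : ℕ) (r : ℕ∞) (hr : 2 ≤ r) (M : Type*) [TopologicalSpace M]
    [ChartedSpace (EuclideanSpace ℝ (Fin n)) M]
    [IsManifold (𝓡 n) (⊤ : ℕ∞) M] [CompactSpace M] [T2Space M] :
    ∃ f : M → EuclideanSpace ℝ (Fin (2 * n + 1)),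
      ContMDiff (𝓡 n) 𝓘(ℝ, EuclideanSpace ℝ (Fin (2 * n + 1))) r f ∧
      Topology.IsEmbedding f ∧
      ∀ x : M, Function.Injective
        (mfderiv (𝓡 n) 𝓘(ℝ, EuclideanSpace ℝ (Fin (2 * n + 1))) f x) := by
  obtain ⟨N₀, e, he, hemb, himm⟩ :=
    exists_embedding_euclidean_of_compact (I := 𝓡 n) (M := M)
  -- pad up to `2n+1+j` for some `j`
  obtain ⟨j, hj⟩ : ∃ j, max N₀ (2 * n + 1) = 2 * n + 1 + j :=
    ⟨max N₀ (2 * n + 1) - (2 * n + 1), (Nat.add_sub_cancel' (le_max_right _ _)).symm⟩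
  obtain ⟨L, hLinj⟩ := whitney_pad (a := N₀) (b := 2 * n + 1 + j)
    (hj ▸ le_max_left N₀ (2 * n + 1))
  have hg : ContMDiff (𝓡 n) 𝓘(ℝ, EuclideanSpace ℝ (Fin (2 * n + 1 + j))) ∞ (⇑L ∘ e) :=
    (L.contDiff.contMDiff (n := ∞)).comp he
  have h1 : Function.Injective (⇑L ∘ e) := hLinj.comp hemb.injective
  have h2 : ∀ x : M, Function.Injective
      (mfderiv (𝓡 n) 𝓘(ℝ, EuclideanSpace ℝ (Fin (2 * n + 1 + j))) (⇑L ∘ e) x) := by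
    intro x
    rw [whitney_mfderiv_clm_comp he L x]
    exact hLinj.comp (himm x)
  obtain ⟨f, hf, hfinj, hfimm⟩ := whitney_down j (⇑L ∘ e) hg h1 h2
  exact ⟨f, hf.of_le (by exact_mod_cast le_top), (hf.continuous.isClosedEmbedding hfinj).toIsEmbedding, hfimm⟩
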